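/- For each n ∈ ℕ, there are at most 30 reduced words of length n over the alphabet {a,b,c} containing no subword from the set Δ = {aba, bcb, cac, acbacabca, bacbabcab, cbacbcabc}. -/

import Mathlib

-- letters `a`, `b`, `c` encoded as `0`, `1`, `2` in `Fin 3`
notation "la" => (0 : Fin 3)
notation "lb" => (1 : Fin 3)
notation "lc" => (2 : Fin 3)

/-- A word is reduced if no two consecutive letters coincide. -/
def IsReducedWord (w : List (Fin 3)) : Prop := w.Chain' (· ≠ ·)

/-- The set `Δ = {aba, bcb, cac, acbacabca, bacbabcab, cbacbcabc}`. -/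
def Delta : Set (List (Fin 3)) :=
  {[la, lb, la], [lb, lc, lb], [lc, la, lc],
   [la, lc, lb, la, lc, la, lb, lc, la],
   [lb, la, lc, lb, la, lb, lc, la, lb],
   [lc, lb, la, lc, lb, lc, la, lb, lc]}

/-- `Δ` as a list. -/
def DL : List (List (Fin 3)) :=
  [[la, lb, la], [lb, lc, lb], [lc, la, lc],
   [la, lc, lb, la, lc, la, lb, lc, la],
   [lb, la, lc, lb, la, lb, lc, la, lb],
   [lc, lb, la, lc, lb, lc, la, lb, lc]]

/-- Boolean check that no two consecutive letters are equal. -/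
def chainb : List (Fin 3) → Bool
  | a :: b :: t => a != b && chainb (b :: t)
  | _ => true

/-- Boolean infix check. -/
def infixb (d : List (Fin 3)) : List (Fin 3) → Bool
  | [] => d.isEmpty
  | a :: t => d.isPrefixOf (a :: t) || infixb d t

lemma infixb_iff (d w : List (Fin 3)) : infixb d w = true ↔ d <:+: w := by
  induction w with
  | nil => cases d <;> simp [infixb, List.isEmpty]
  | cons a t ih =>
    rw [List.infix_cons_iff, infixb, Bool.or_eq_true, ih, List.isPrefixOf_iff_prefix]

lemma chainb_iff (w : List (Fin 3)) : chainb w = true ↔ w.Chain' (· ≠ ·) := by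
  induction w with
  | nil => simp [chainb, List.Chain']
  | cons a t ih =>
    cases t with
    | nil => simp [chainb, List.Chain']
    | cons b t2 =>
      unfold List.Chain' at ih ⊢
      rw [List.isChain_cons_cons, ← ih, chainb, Bool.and_eq_true, bne_iff_ne]

/-- Boolean validity check. -/
def qb (w : List (Fin 3)) : Bool := chainb w && !(DL.any (fun d => infixb d w))

/-- Validity: reduced and avoiding all patterns of `DL`. -/
def QP (w : List (Fin 3)) : Prop := w.Chain' (· ≠ ·) ∧ ∀ d ∈ DL, ¬ d <:+: w

lemma qb_iff {w : List (Fin 3)} : qb w = true ↔ QP w := by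
  simp [qb, QP, chainb_iff, List.any_eq_true, infixb_iff]

/-- Letters which validly extend a word on the right. -/
def extL (u : List (Fin 3)) : List (Fin 3) := [la, lb, lc].filter (fun x => qb (u ++ [x]))

/-- The list of all valid words of length `n`. -/
def F : ℕ → List (List (Fin 3))
  | 0 => [[]]
  | n + 1 => (F n).flatMap (fun u => (extL u).map (fun x => u ++ [x]))

lemma mem_F {n : ℕ} {w : List (Fin 3)} (h : w ∈ F n) : w.length = n ∧ QP w := by
  induction n generalizing w with
  | zero =>
    simp only [F, List.mem_singleton] at h
    subst h
    refine ⟨rfl, List.isChain_nil, fun d hd hinf => ?_⟩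
    rw [List.infix_nil] at hinf
    subst hinf
    simp [DL] at hd
  | succ n ih =>
    simp only [F, List.mem_flatMap, List.mem_map, extL, List.mem_filter] at h
    obtain ⟨u, hu, x, ⟨-, hQ⟩, rfl⟩ := h
    obtain ⟨hlen, -⟩ := ih hu
    exact ⟨by simp [hlen], qb_iff.1 hQ⟩

lemma F_mem {n : ℕ} {w : List (Fin 3)} (h1 : w.length = n) (h2 : QP w) : w ∈ F n := by
  induction n generalizing w with
  | zero =>
    simp only [F, List.mem_singleton]
    exact List.length_eq_zero_iff.1 h1
  | succ n ih =>
    rcases List.eq_nil_or_concat w with rfl | ⟨L, b, rfl⟩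
    · simp at h1
    rw [List.concat_eq_append] at *
    have hL : QP L := by
      refine ⟨h2.1.prefix (L.prefix_append [b]), fun d hd hinf => h2.2 d hd ?_⟩
      exact hinf.trans (L.prefix_append [b]).isInfix
    have hLlen : L.length = n := by
      simp only [List.length_append, List.length_singleton] at h1; omega
    have hb : b ∈ extL L := by
      simp only [extL, List.mem_filter]
      exact ⟨by fin_cases b <;> simp, qb_iff.2 h2⟩
    simp only [F, List.mem_flatMap, List.mem_map]
    exact ⟨L, ih hLlen hL, b, hb, rfl⟩

lemma QP_infix {w v : List (Fin 3)} (h : QP w) (hv : v <:+: w) : QP v :=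
  ⟨h.1.infix hv, fun d hd hdv => h.2 d hd (hdv.trans hv)⟩

lemma suffix_suffix {d e w : List (Fin 3)} (hd : d <:+ w) (he : e <:+ w)
    (h : d.length ≤ e.length) : d <:+ e := by
  rw [← List.reverse_prefix] at hd he ⊢
  exact List.prefix_of_prefix_length_le hd he (by simpa using h)

lemma infix_concat {d u : List (Fin 3)} {x : Fin 3} (h : d <:+: u ++ [x]) :
    d <:+: u ∨ d <:+ u ++ [x] := by
  obtain ⟨s, t, hst⟩ := h
  rcases List.eq_nil_or_concat t with rfl | ⟨L, b, rfl⟩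
  · right; exact ⟨s, by simpa using hst⟩
  · left
    rw [List.concat_eq_append, ← List.append_assoc] at hst
    obtain ⟨h1, -⟩ := List.append_inj' hst rfl
    exact ⟨s, L, h1⟩

/-- The suffix of length `8`. -/
def suf8 (w : List (Fin 3)) : List (Fin 3) := w.drop (w.length - 8)

lemma DL_len {d : List (Fin 3)} (hd : d ∈ DL) : d.length ≤ 9 := by
  fin_cases hd <;> decide

lemma ext_local {u : List (Fin 3)} {x : Fin 3} (h8 : 8 ≤ u.length) (hu : QP u) :
    QP (u ++ [x]) ↔ QP (suf8 u ++ [x]) := by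
  have hs : suf8 u ++ [x] = (u ++ [x]).drop (u.length - 8) :=
    (List.drop_append_of_le_length (by omega)).symm
  constructor
  · intro h
    refine QP_infix h ?_
    rw [hs]; exact (List.drop_suffix _ _).isInfix
  · intro h
    have hsuflen : (suf8 u).length = 8 := by
      simp only [suf8, List.length_drop]; omega
    have hsufne : suf8 u ≠ [] := List.ne_nil_of_length_pos (by omega)
    have hlast : u.getLast? = (suf8 u).getLast? := by
      conv_lhs => rw [← List.take_append_drop (u.length - 8) u]
      exact List.getLast?_append_of_ne_nil _ hsufne
    constructor
    · rw [List.Chain', List.isChain_append]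
      refine ⟨hu.1, List.isChain_singleton _, ?_⟩
      have h2 := (List.isChain_append.1 h.1).2.2
      exact fun a ha y hy => h2 a (hlast ▸ ha) y hy
    · intro d hd hinf
      rcases infix_concat hinf with h1 | h2
      · exact hu.2 d hd h1
      · have hd9 : d.length ≤ 9 := DL_len hd
        have hsuf : (suf8 u ++ [x]) <:+ (u ++ [x]) := by
          rw [hs]; exact List.drop_suffix _ _
        have hlen : d.length ≤ (suf8 u ++ [x]).length := by
          simp only [List.length_append, List.length_singleton, hsuflen]; omega
        exact h.2 d hd (suffix_suffix h2 hsuf hlen).isInfix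

lemma suf8_append {u : List (Fin 3)} {x : Fin 3} (h8 : 8 ≤ u.length) :
    suf8 (u ++ [x]) = (suf8 u).drop 1 ++ [x] := by
  show (u ++ [x]).drop ((u ++ [x]).length - 8) = (u.drop (u.length - 8)).drop 1 ++ [x]
  rw [List.drop_drop, List.length_append, List.length_singleton,
    List.drop_append_of_le_length (by omega)]
  congr 2
  omega

/-- One-step evolution on suffix states. -/
def step (s : List (Fin 3)) : Multiset (List (Fin 3)) :=
  (([la, lb, lc].filter (fun x => qb (s ++ [x]))).map (fun x => s.drop 1 ++ [x]) :
    List (List (Fin 3)))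

lemma map_suf8_F {n : ℕ} (h : 8 ≤ n) :
    (((F (n + 1)).map suf8 : List (List (Fin 3))) : Multiset (List (Fin 3)))
      = (((F n).map suf8 : List (List (Fin 3))) : Multiset (List (Fin 3))).bind step := by
  conv_rhs => rw [← Multiset.map_coe, Multiset.bind_map]
  have e1 : (((F (n + 1)).map suf8 : List (List (Fin 3))) : Multiset (List (Fin 3)))
      = ((F n : List (List (Fin 3))) : Multiset (List (Fin 3))).bind
          (fun u => ((extL u).map (fun x => suf8 (u ++ [x])) : List (List (Fin 3)))) := by
    rw [Multiset.coe_bind]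
    congr 1
    simp only [F, List.map_flatMap, List.map_map]
    rfl
  rw [e1]
  refine Multiset.bind_congr (fun u hu => ?_)
  rw [Multiset.mem_coe] at hu
  obtain ⟨hlen, hQ⟩ := mem_F hu
  have h8 : 8 ≤ u.length := hlen ▸ h
  have hlist : (extL u).map (fun x => suf8 (u ++ [x]))
      = ([la, lb, lc].filter (fun x => qb (suf8 u ++ [x]))).map
          (fun x => (suf8 u).drop 1 ++ [x]) := by
    rw [extL, List.filter_congr (fun x _ => ?_)]
    · exact List.map_congr_left (fun x _ => suf8_append h8)
    · rw [Bool.eq_iff_iff, qb_iff, qb_iff]; exact ext_local h8 hQ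
  rw [hlist]
  rfl

def M : Multiset (List (Fin 3)) := (((F 11).map suf8 : List (List (Fin 3))) : Multiset (List (Fin 3)))

lemma M_fixed : M.bind step = M := by decide

lemma m_eq {n : ℕ} (h : 11 ≤ n) :
    (((F n).map suf8 : List (List (Fin 3))) : Multiset (List (Fin 3))) = M := by
  induction n with
  | zero => omega
  | succ n ih =>
    rcases Nat.lt_or_ge n 11 with h' | h'
    · have h11 : n + 1 = 11 := by omega
      rw [h11]; rfl
    · rw [map_suf8_F (by omega), ih h', M_fixed]

lemma card_F (n : ℕ) : (F n).length ≤ 30 := by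
  rcases Nat.lt_or_ge n 11 with h | h
  · interval_cases n <;> decide
  · have hm := m_eq h
    have h1 : (F n).length = Multiset.card M := by
      rw [← hm, Multiset.coe_card, List.length_map]
    rw [h1]; decide

lemma DL_sub {d : List (Fin 3)} (hd : d ∈ DL) : d ∈ Delta := by
  fin_cases hd <;> simp [Delta]

/-- For each `n`, there are at most `30` reduced words of length `n` over `{a,b,c}`
containing no subword from `Δ`. -/
theorem reduced_words_avoiding_Delta (n : ℕ) :
    Set.ncard {w : List (Fin 3) | w.length = n ∧ IsReducedWord w ∧
      ∀ d ∈ Delta, ¬ d <:+: w} ≤ 30 := by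
  classical
  have hsub : {w : List (Fin 3) | w.length = n ∧ IsReducedWord w ∧
      ∀ d ∈ Delta, ¬ d <:+: w} ⊆ ((F n).toFinset : Set (List (Fin 3))) := by
    intro w hw
    obtain ⟨hl, hr, hD⟩ := hw
    have hQ : QP w := ⟨hr, fun d hd => hD d (DL_sub hd)⟩
    simp only [Finset.mem_coe, List.mem_toFinset]
    exact F_mem hl hQ
  calc Set.ncard _ ≤ Set.ncard ((F n).toFinset : Set (List (Fin 3))) :=
        Set.ncard_le_ncard hsub (Finset.finite_toSet _)
    _ = (F n).toFinset.card := Set.ncard_coe_finset _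
    _ ≤ (F n).length := List.toFinset_card_le _
    _ ≤ 30 := card_F n
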